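/- arXiv:2006.14062 — 3 statements merged into one kernel-verified Lean document; each statement's English description precedes it below -/
import Mathlib

section
/- Let {μ*_j}_{j=1}^K ⊆ ℝ^d and labels {y*_i}_{i=1}^n ⊆ [K], with s = min_{j≠k} ‖μ*_j - μ*_k‖₂ and n_min = min_j |{i : y*_i = j}|. Suppose {μ̂_j}, {ŷ_i} satisfy the near-optimality and low-noise conditions of approximate k-means with parameters C > 0 and δ ∈ (0, s/2). Then there exists a permutation τ of [K] such that ∑_{j=1}^K ‖μ*_j - μ̂_{τ(j)}‖₂² ≤ ((1+√C)²·K/n_min)·L({μ*_j},{y*_i}). -/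
/-- The k-means loss `L({μ_j},{y_i}) = ∑ᵢ ‖x_i - μ_{y_i}‖²`. -/
noncomputable def kmeansLoss {n d K : ℕ} (x : Fin n → EuclideanSpace ℝ (Fin d))
    (μ : Fin K → EuclideanSpace ℝ (Fin d)) (y : Fin n → Fin K) : ℝ :=
  ∑ i, dist (x i) (μ (y i)) ^ 2

/-- Approximate k-means (Lemma on center recovery): under near-optimality and the
low-noise condition, there is a permutation `τ` with
`∑_j ‖μ*_j - μ̂_{τ(j)}‖² ≤ (1+√C)² K / n_min · L({μ*_j},{y*_i})`. -/
theorem approx_kmeans_center_recovery {n d K : ℕ} (hK : 0 < K)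
    (x : Fin n → EuclideanSpace ℝ (Fin d))
    (μstar μhat : Fin K → EuclideanSpace ℝ (Fin d))
    (ystar yhat : Fin n → Fin K) (C s δ : ℝ) (nmin : ℕ)
    (hC : 0 < C) (hnmin0 : 0 < nmin)
    (hs : ∀ j k, j ≠ k → s ≤ dist (μstar j) (μstar k))
    (hnmin : ∀ j, nmin ≤ Set.ncard {i | ystar i = j})
    (hδ0 : 0 < δ) (hδs : δ < s / 2)
    (hnear : kmeansLoss x μhat yhat ≤ C * kmeansLoss x μstar ystar)
    (hargmin : ∀ i j, dist (x i) (μhat (yhat i)) ≤ dist (x i) (μhat j))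
    (hlow : kmeansLoss x μstar ystar ≤
      δ ^ 2 * nmin / ((1 + Real.sqrt C) ^ 2 * K)) :
    ∃ τ : Equiv.Perm (Fin K),
      ∑ j, dist (μstar j) (μhat (τ j)) ^ 2 ≤
        (1 + Real.sqrt C) ^ 2 * K / nmin * kmeansLoss x μstar ystar := by
  classical
  set L := kmeansLoss x μstar ystar with hLdef
  have hL0 : 0 ≤ L := Finset.sum_nonneg fun i _ => by positivity
  have hsqC : (0:ℝ) < 1 + Real.sqrt C := by positivity
  set B : ℝ := (1 + Real.sqrt C) ^ 2 * L / nmin with hBdef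
  have hnminR : (0:ℝ) < (nmin : ℝ) := by exact_mod_cast hnmin0
  have hKR : (0:ℝ) < (K : ℝ) := by exact_mod_cast hK
  -- key existence of near center for each true cluster
  have key : ∀ j : Fin K, ∃ c : Fin K, dist (μstar j) (μhat c) ^ 2 ≤ B := by
    intro j
    set S : Finset (Fin n) := Finset.univ.filter (fun i => ystar i = j) with hSdef
    have hScard : nmin ≤ S.card := by
      have : {i | ystar i = j} = (S : Set (Fin n)) := by
        ext i; simp [hSdef]
      have h := hnmin j
      rwa [this, Set.ncard_coe_finset] at h
    have hSne : S.Nonempty := Finset.card_pos.mp (lt_of_lt_of_le hnmin0 hScard)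
    set f : Fin n → ℝ := fun i => dist (x i) (μstar j) + dist (x i) (μhat (yhat i)) with hfdef
    -- bound the sum of f² over S
    have ha : ∑ i ∈ S, dist (x i) (μstar j) ^ 2 ≤ L := by
      have : ∑ i ∈ S, dist (x i) (μstar j) ^ 2
          = ∑ i ∈ S, dist (x i) (μstar (ystar i)) ^ 2 := by
        apply Finset.sum_congr rfl
        intro i hi
        have : ystar i = j := (Finset.mem_filter.mp hi).2
        rw [this]
      rw [this, hLdef, kmeansLoss]
      exact Finset.sum_le_sum_of_subset_of_nonneg (Finset.subset_univ S)
        (fun i _ _ => by positivity)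
    have hb : ∑ i ∈ S, dist (x i) (μhat (yhat i)) ^ 2 ≤ C * L := by
      refine le_trans ?_ hnear
      rw [kmeansLoss]
      exact Finset.sum_le_sum_of_subset_of_nonneg (Finset.subset_univ S)
        (fun i _ _ => by positivity)
    have hcross : ∑ i ∈ S, dist (x i) (μstar j) * dist (x i) (μhat (yhat i))
        ≤ Real.sqrt C * L := by
      have hcs := Finset.sum_mul_sq_le_sq_mul_sq S
        (fun i => dist (x i) (μstar j)) (fun i => dist (x i) (μhat (yhat i)))
      have hnn : 0 ≤ ∑ i ∈ S, dist (x i) (μstar j) * dist (x i) (μhat (yhat i)) :=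
        Finset.sum_nonneg fun i _ => mul_nonneg dist_nonneg dist_nonneg
      have h1 : ∑ i ∈ S, dist (x i) (μstar j) * dist (x i) (μhat (yhat i))
          ≤ Real.sqrt (L * (C * L)) := by
        rw [← Real.sqrt_sq hnn]
        apply Real.sqrt_le_sqrt
        refine hcs.trans ?_
        have h2 : 0 ≤ ∑ i ∈ S, dist (x i) (μhat (yhat i)) ^ 2 :=
          Finset.sum_nonneg fun i _ => by positivity
        have h3 : 0 ≤ ∑ i ∈ S, dist (x i) (μstar j) ^ 2 :=
          Finset.sum_nonneg fun i _ => by positivity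
        exact mul_le_mul ha hb h2 hL0
      refine h1.trans_eq ?_
      rw [show L * (C * L) = C * L ^ 2 by ring, Real.sqrt_mul hC.le,
        Real.sqrt_sq hL0]
    have hsum : ∑ i ∈ S, f i ^ 2 ≤ (1 + Real.sqrt C) ^ 2 * L := by
      have hexp : ∀ i, f i ^ 2 = dist (x i) (μstar j) ^ 2
          + 2 * (dist (x i) (μstar j) * dist (x i) (μhat (yhat i)))
          + dist (x i) (μhat (yhat i)) ^ 2 := fun i => by rw [hfdef]; ring
      calc ∑ i ∈ S, f i ^ 2
          = (∑ i ∈ S, dist (x i) (μstar j) ^ 2)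
            + 2 * (∑ i ∈ S, dist (x i) (μstar j) * dist (x i) (μhat (yhat i)))
            + ∑ i ∈ S, dist (x i) (μhat (yhat i)) ^ 2 := by
            simp only [hexp]
            rw [Finset.sum_add_distrib, Finset.sum_add_distrib, Finset.mul_sum]
        _ ≤ L + 2 * (Real.sqrt C * L) + C * L := by
            gcongr
        _ = (1 + Real.sqrt C) ^ 2 * L := by
            have : Real.sqrt C ^ 2 = C := Real.sq_sqrt hC.le
            nlinarith [this]
    obtain ⟨i₀, hi₀S, hi₀min⟩ := S.exists_min_image f hSne
    have hf0 : 0 ≤ f i₀ := by rw [hfdef]; positivity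
    have hcard : (S.card : ℝ) * f i₀ ^ 2 ≤ (1 + Real.sqrt C) ^ 2 * L := by
      have h := Finset.card_nsmul_le_sum S (fun i => f i ^ 2) (f i₀ ^ 2)
        (fun i hi => by
          have := hi₀min i hi
          exact pow_le_pow_left₀ hf0 this 2)
      rw [nsmul_eq_mul] at h
      exact h.trans hsum
    refine ⟨yhat i₀, ?_⟩
    have htri : dist (μstar j) (μhat (yhat i₀)) ≤ f i₀ := by
      rw [hfdef]
      calc dist (μstar j) (μhat (yhat i₀))
          ≤ dist (μstar j) (x i₀) + dist (x i₀) (μhat (yhat i₀)) := dist_triangle _ _ _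
        _ = dist (x i₀) (μstar j) + dist (x i₀) (μhat (yhat i₀)) := by rw [dist_comm]
    have h1 : dist (μstar j) (μhat (yhat i₀)) ^ 2 ≤ f i₀ ^ 2 :=
      pow_le_pow_left₀ dist_nonneg htri 2
    refine h1.trans ?_
    rw [hBdef, le_div_iff₀ hnminR]
    calc f i₀ ^ 2 * nmin ≤ f i₀ ^ 2 * S.card := by
          have hc : (nmin:ℝ) ≤ S.card := by exact_mod_cast hScard
          exact mul_le_mul_of_nonneg_left hc (sq_nonneg _)
      _ = (S.card : ℝ) * f i₀ ^ 2 := by ring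
      _ ≤ (1 + Real.sqrt C) ^ 2 * L := hcard
  choose σ hσ using key
  -- B ≤ δ²/K
  have hBδ : B ≤ δ ^ 2 / K := by
    rw [hBdef, div_le_div_iff₀ hnminR hKR]
    have h := hlow
    rw [div_eq_mul_inv] at h
    have h2 : (1 + Real.sqrt C) ^ 2 * L * K ≤ δ ^ 2 * nmin := by
      have hpos : (0:ℝ) < (1 + Real.sqrt C) ^ 2 * K := by positivity
      calc (1 + Real.sqrt C) ^ 2 * L * K
          ≤ (1 + Real.sqrt C) ^ 2 * (δ ^ 2 * nmin * ((1 + Real.sqrt C) ^ 2 * K)⁻¹) * K := by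
            gcongr
        _ = δ ^ 2 * nmin * (((1 + Real.sqrt C) ^ 2 * K) * ((1 + Real.sqrt C) ^ 2 * K)⁻¹) := by
            ring
        _ = δ ^ 2 * nmin := by rw [mul_inv_cancel₀ hpos.ne', mul_one]
    linarith
  have hδ' : ∀ j, dist (μstar j) (μhat (σ j)) ≤ δ := by
    intro j
    have h1 : dist (μstar j) (μhat (σ j)) ^ 2 ≤ δ ^ 2 := by
      refine (hσ j).trans (hBδ.trans ?_)
      rw [div_le_iff₀ hKR]
      have hK1 : (1:ℝ) ≤ K := by exact_mod_cast hK
      nlinarith [sq_nonneg δ, hK1]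
    nlinarith [dist_nonneg (x := μstar j) (y := μhat (σ j)), hδ0]
  have hinj : Function.Injective σ := by
    intro j k hjk
    by_contra hne
    have h1 : s ≤ dist (μstar j) (μstar k) := hs j k hne
    have h2 : dist (μstar j) (μstar k)
        ≤ dist (μstar j) (μhat (σ j)) + dist (μhat (σ k)) (μstar k) := by
      rw [hjk]; exact dist_triangle _ _ _
    have h3 : dist (μhat (σ k)) (μstar k) ≤ δ := by rw [dist_comm]; exact hδ' k
    linarith [hδ' j]
  let τ : Equiv.Perm (Fin K) := Equiv.ofBijective σ (Finite.injective_iff_bijective.mp hinj)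
  refine ⟨τ, ?_⟩
  have hτ : ∀ j, τ j = σ j := fun j => rfl
  calc ∑ j, dist (μstar j) (μhat (τ j)) ^ 2 ≤ ∑ _j : Fin K, B := by
        apply Finset.sum_le_sum
        intro j _
        rw [hτ]
        exact hσ j
    _ = K * B := by rw [Finset.sum_const, Finset.card_univ, Fintype.card_fin, nsmul_eq_mul]
    _ = (1 + Real.sqrt C) ^ 2 * K / nmin * L := by
        rw [hBdef]; field_simp
end

section
/- In the setting of the approximate k-means lemma, with permutation τ as constructed, the set of misclassified points satisfies {i : ŷ_i ≠ τ(y*_i)} ⊆ {i : ‖x_i - μ*_{y*_i}‖₂ ≥ s/2 - δ}, and hence |{i : ŷ_i ≠ τ(y*_i)}| ≤ L({μ*_j},{y*_i})/(s/2 - δ)². -/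
/-- Approximate k-means (misclassification part): with a matching permutation `τ`
satisfying `‖μ*_j - μ̂_{τ(j)}‖ ≤ δ` for all `j`, every misclassified point `i`
satisfies `‖x_i - μ*_{y*_i}‖ ≥ s/2 - δ`, and hence the number of misclassified
points is at most `L({μ*_j},{y*_i}) / (s/2 - δ)²`. -/
theorem approx_kmeans_misclassification {n d K : ℕ} (hK : 0 < K)
    (x : Fin n → EuclideanSpace ℝ (Fin d))
    (μstar μhat : Fin K → EuclideanSpace ℝ (Fin d))
    (ystar yhat : Fin n → Fin K) (C s δ : ℝ) (nmin : ℕ)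
    (hC : 0 < C) (hnmin0 : 0 < nmin)
    (hs : ∀ j k, j ≠ k → s ≤ dist (μstar j) (μstar k))
    (hnmin : ∀ j, nmin ≤ Set.ncard {i | ystar i = j})
    (hδ0 : 0 < δ) (hδs : δ < s / 2)
    (hnear : kmeansLoss x μhat yhat ≤ C * kmeansLoss x μstar ystar)
    (hargmin : ∀ i j, dist (x i) (μhat (yhat i)) ≤ dist (x i) (μhat j))
    (hlow : kmeansLoss x μstar ystar ≤
      δ ^ 2 * nmin / ((1 + Real.sqrt C) ^ 2 * K))
    (τ : Equiv.Perm (Fin K))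
    (hτ : ∀ j, dist (μstar j) (μhat (τ j)) ≤ δ) :
    {i : Fin n | yhat i ≠ τ (ystar i)} ⊆
      {i : Fin n | s / 2 - δ ≤ dist (x i) (μstar (ystar i))} ∧
    (Set.ncard {i : Fin n | yhat i ≠ τ (ystar i)} : ℝ) ≤
      kmeansLoss x μstar ystar / (s / 2 - δ) ^ 2 := by

  have ha : 0 < s / 2 - δ := by linarith
  have hsub : {i : Fin n | yhat i ≠ τ (ystar i)} ⊆
      {i : Fin n | s / 2 - δ ≤ dist (x i) (μstar (ystar i))} := by
    intro i hi
    simp only [Set.mem_setOf_eq] at hi ⊢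
    by_contra hcon
    push_neg at hcon
    set r := dist (x i) (μstar (ystar i)) with hr
    have h1 : dist (x i) (μhat (τ (ystar i))) ≤ r + δ :=
      (dist_triangle _ (μstar (ystar i)) _).trans (by linarith [hτ (ystar i)])
    have h2 : dist (x i) (μhat (yhat i)) ≤ r + δ :=
      (hargmin i (τ (ystar i))).trans h1
    set k := τ.symm (yhat i) with hk
    have hky : k ≠ ystar i := by
      intro h; apply hi; rw [← h, hk]; simp
    have h3 : s ≤ dist (μstar (ystar i)) (μstar k) := hs _ _ (Ne.symm hky)
    have h4 : dist (μstar k) (μhat (yhat i)) ≤ δ := by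
      have := hτ k; rwa [hk, Equiv.apply_symm_apply] at this
    have h5 : dist (μstar (ystar i)) (μstar k) ≤
        r + dist (x i) (μhat (yhat i)) + δ := by
      calc dist (μstar (ystar i)) (μstar k)
          ≤ dist (μstar (ystar i)) (x i) + dist (x i) (μstar k) :=
            dist_triangle _ _ _
        _ ≤ r + (dist (x i) (μhat (yhat i)) + dist (μhat (yhat i)) (μstar k)) := by
            rw [dist_comm (μstar (ystar i))]
            exact add_le_add le_rfl (dist_triangle _ _ _)
        _ ≤ r + dist (x i) (μhat (yhat i)) + δ := by
            rw [dist_comm (μhat (yhat i))]; linarith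
    linarith
  refine ⟨hsub, ?_⟩
  classical
  set F := Finset.univ.filter fun i : Fin n => yhat i ≠ τ (ystar i) with hF
  have hset : {i : Fin n | yhat i ≠ τ (ystar i)} = ↑F := by
    ext i; simp [hF]
  have hcard : Set.ncard {i : Fin n | yhat i ≠ τ (ystar i)} = F.card := by
    rw [hset, Set.ncard_coe_finset]
  have hbound : (F.card : ℝ) * (s/2 - δ)^2 ≤ kmeansLoss x μstar ystar := by
    have h1 : ∀ i ∈ F, (s/2-δ)^2 ≤ dist (x i) (μstar (ystar i)) ^ 2 := by
      intro i hi
      have hi' : s/2 - δ ≤ dist (x i) (μstar (ystar i)) :=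
        hsub (by simpa [hF] using hi)
      exact pow_le_pow_left₀ ha.le hi' 2
    calc (F.card : ℝ) * (s/2-δ)^2 = ∑ _i ∈ F, (s/2-δ)^2 := by
          rw [Finset.sum_const, nsmul_eq_mul]
      _ ≤ ∑ i ∈ F, dist (x i) (μstar (ystar i)) ^ 2 := Finset.sum_le_sum h1
      _ ≤ ∑ i, dist (x i) (μstar (ystar i)) ^ 2 :=
          Finset.sum_le_sum_of_subset_of_nonneg (Finset.subset_univ _)
            (fun i _ _ => sq_nonneg _)
      _ = kmeansLoss x μstar ystar := rfl
  rw [hcard, le_div_iff₀ (by positivity)]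
  exact hbound
end

section
/- Suppose the matrices Ŷ M̂ᵀ and Y* M*ᵀ (built from estimated/true labels and centers as described) satisfy ‖Ŷ M̂ᵀ - Y* M*ᵀ‖_F² < n_min·s²/(4K), where s = min_{j≠k}‖μ*_j - μ*_k‖₂ and n_min is the minimum true cluster size. Define τ(j) = argmax_k |{i : y*_i = j, ŷ_i = k}|. Then τ : [K] → [K] is injective (a permutation), and ∑_{j=1}^K ‖μ*_j - μ̂_{τ(j)}‖₂² ≤ (K/n_min)·‖Ŷ M̂ᵀ - Y* M*ᵀ‖_F². -/
/-- Matching-by-plurality step of the approximate k-means analysis.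
If `‖Ŷ M̂ᵀ - Y* M*ᵀ‖_F² = ∑ᵢ ‖μ̂_{ŷ_i} - μ*_{y*_i}‖² < n_min s² / (4K)` and
`τ(j)` maximizes `k ↦ |{i : y*_i = j, ŷ_i = k}|`, then `τ` is injective
(a permutation) and `∑_j ‖μ*_j - μ̂_{τ(j)}‖² ≤ (K/n_min) ‖Ŷ M̂ᵀ - Y* M*ᵀ‖_F²`. -/
theorem kmeans_plurality_matching {n d K : ℕ} (hK : 0 < K)
    (μstar μhat : Fin K → EuclideanSpace ℝ (Fin d))
    (ystar yhat : Fin n → Fin K) (s : ℝ) (nmin : ℕ)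
    (hs0 : 0 < s) (hnmin0 : 0 < nmin)
    (hs : ∀ j k, j ≠ k → s ≤ dist (μstar j) (μstar k))
    (hnmin : ∀ j, nmin ≤ Set.ncard {i | ystar i = j})
    (hF : ∑ i, dist (μhat (yhat i)) (μstar (ystar i)) ^ 2 <
      nmin * s ^ 2 / (4 * K))
    (τ : Fin K → Fin K)
    (hτ : ∀ j k, Set.ncard {i | ystar i = j ∧ yhat i = k} ≤
      Set.ncard {i | ystar i = j ∧ yhat i = τ j}) :
    Function.Injective τ ∧
    ∑ j, dist (μstar j) (μhat (τ j)) ^ 2 ≤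
      (K : ℝ) / nmin * ∑ i, dist (μhat (yhat i)) (μstar (ystar i)) ^ 2 := by
  classical
  set F : ℝ := ∑ i, dist (μhat (yhat i)) (μstar (ystar i)) ^ 2 with hFdef
  set A : Fin K → Finset (Fin n) :=
    fun j => Finset.univ.filter (fun i => ystar i = j ∧ yhat i = τ j) with hA
  set S : Fin K → Fin K → ℕ :=
    fun j k => (Finset.univ.filter (fun i => ystar i = j ∧ yhat i = k)).card with hSdef
  have hτ' : ∀ j k, S j k ≤ S j (τ j) := by
    intro j k
    have h := hτ j k
    have e1 : {i | ystar i = j ∧ yhat i = k} =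
        ↑(Finset.univ.filter (fun i => ystar i = j ∧ yhat i = k)) := by ext i; simp
    have e2 : {i | ystar i = j ∧ yhat i = τ j} =
        ↑(Finset.univ.filter (fun i => ystar i = j ∧ yhat i = τ j)) := by ext i; simp
    rwa [e1, e2, Set.ncard_coe_finset, Set.ncard_coe_finset] at h
  have hcard : ∀ j, nmin ≤ K * S j (τ j) := by
    intro j
    have h1 : nmin ≤ (Finset.univ.filter (fun i => ystar i = j)).card := by
      have h := hnmin j
      have e : {i | ystar i = j} = ↑(Finset.univ.filter (fun i => ystar i = j)) := by
        ext i; simp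
      rwa [e, Set.ncard_coe_finset] at h
    have h2 : (Finset.univ.filter (fun i => ystar i = j)).card = ∑ k, S j k := by
      rw [Finset.card_eq_sum_card_fiberwise (f := yhat) (t := Finset.univ)
        (fun x _ => Finset.mem_univ _)]
      refine Finset.sum_congr rfl fun k _ => ?_
      rw [hSdef]
      congr 1
      rw [Finset.filter_filter]
    have h3 : ∑ k, S j k ≤ ∑ _k : Fin K, S j (τ j) :=
      Finset.sum_le_sum (fun k _ => hτ' j k)
    simp only [Finset.sum_const, Finset.card_univ, Fintype.card_fin, smul_eq_mul] at h3
    omega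
  have hsum : ∀ j, ∑ i ∈ A j, dist (μhat (yhat i)) (μstar (ystar i)) ^ 2 =
      (S j (τ j) : ℝ) * dist (μstar j) (μhat (τ j)) ^ 2 := by
    intro j
    calc ∑ i ∈ A j, dist (μhat (yhat i)) (μstar (ystar i)) ^ 2
        = ∑ _i ∈ A j, dist (μstar j) (μhat (τ j)) ^ 2 := by
          refine Finset.sum_congr rfl fun i hi => ?_
          simp only [hA, Finset.mem_filter] at hi
          rw [hi.2.1, hi.2.2, dist_comm]
      _ = (S j (τ j) : ℝ) * dist (μstar j) (μhat (τ j)) ^ 2 := by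
          rw [Finset.sum_const, nsmul_eq_mul]
  have hdisj : Set.PairwiseDisjoint (Finset.univ : Finset (Fin K)) A := by
    intro a _ b _ hab
    simp only [Finset.disjoint_left, hA, Finset.mem_filter]
    rintro i ⟨_, h1, _⟩ ⟨_, h2, _⟩
    exact hab (h1 ▸ h2 ▸ rfl)
  have hAle : ∑ j, (S j (τ j) : ℝ) * dist (μstar j) (μhat (τ j)) ^ 2 ≤ F := by
    calc ∑ j, (S j (τ j) : ℝ) * dist (μstar j) (μhat (τ j)) ^ 2
        = ∑ j, ∑ i ∈ A j, dist (μhat (yhat i)) (μstar (ystar i)) ^ 2 := by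
          exact (Finset.sum_congr rfl fun j _ => (hsum j).symm)
      _ = ∑ i ∈ Finset.univ.biUnion A, dist (μhat (yhat i)) (μstar (ystar i)) ^ 2 :=
          (Finset.sum_biUnion hdisj).symm
      _ ≤ F := Finset.sum_le_sum_of_subset_of_nonneg (Finset.subset_univ _)
          (fun i _ _ => by positivity)
  have hKpos : (0:ℝ) < K := by exact_mod_cast hK
  have hnpos : (0:ℝ) < nmin := by exact_mod_cast hnmin0
  have hterm : ∀ j, (nmin : ℝ) / K * dist (μstar j) (μhat (τ j)) ^ 2 ≤
      (S j (τ j) : ℝ) * dist (μstar j) (μhat (τ j)) ^ 2 := by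
    intro j
    have h : (nmin : ℝ) ≤ K * S j (τ j) := by exact_mod_cast hcard j
    have hd : (0:ℝ) ≤ dist (μstar j) (μhat (τ j)) ^ 2 := by positivity
    have : (nmin : ℝ) / K ≤ S j (τ j) := by
      rw [div_le_iff₀ hKpos]; linarith [h, mul_comm (K:ℝ) (S j (τ j) : ℝ)]
    nlinarith
  constructor
  · intro a b hab
    by_contra hne
    have hpair : (S a (τ a) : ℝ) * dist (μstar a) (μhat (τ a)) ^ 2 +
        (S b (τ b) : ℝ) * dist (μstar b) (μhat (τ b)) ^ 2 ≤ F := by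
      have hsub : ({a, b} : Finset (Fin K)) ⊆ Finset.univ := Finset.subset_univ _
      have := Finset.sum_le_sum_of_subset_of_nonneg hsub
        (f := fun j => (S j (τ j) : ℝ) * dist (μstar j) (μhat (τ j)) ^ 2)
        (fun j _ _ => by positivity)
      rw [Finset.sum_pair hne] at this
      linarith [hAle]
    have hx : s ≤ dist (μstar a) (μhat (τ a)) + dist (μstar b) (μhat (τ b)) := by
      calc s ≤ dist (μstar a) (μstar b) := hs a b hne
        _ ≤ dist (μstar a) (μhat (τ a)) + dist (μhat (τ a)) (μstar b) :=
            dist_triangle _ _ _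
        _ = dist (μstar a) (μhat (τ a)) + dist (μstar b) (μhat (τ b)) := by
            rw [hab, dist_comm (μhat (τ b)) (μstar b)]
    have hta := hterm a
    have htb := hterm b
    have hda : (0:ℝ) ≤ dist (μstar a) (μhat (τ a)) := dist_nonneg
    have hdb : (0:ℝ) ≤ dist (μstar b) (μhat (τ b)) := dist_nonneg
    have hlow : (nmin : ℝ) / K * (s ^ 2 / 2) ≤ F := by
      have hsq : s ^ 2 / 2 ≤ dist (μstar a) (μhat (τ a)) ^ 2 +
          dist (μstar b) (μhat (τ b)) ^ 2 := by
        nlinarith [pow_le_pow_left₀ hs0.le hx 2,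
          sq_nonneg (dist (μstar a) (μhat (τ a)) - dist (μstar b) (μhat (τ b)))]
      have hnn : (0:ℝ) ≤ (nmin : ℝ) / K := by positivity
      nlinarith
    have hF2 : F * (4 * K) < (nmin : ℝ) * s ^ 2 :=
      (lt_div_iff₀ (by positivity : (0:ℝ) < 4 * K)).mp hF
    have hKK : (nmin : ℝ) / K * K = nmin := div_mul_cancel₀ _ hKpos.ne'
    nlinarith [mul_le_mul_of_nonneg_right hlow (by positivity : (0:ℝ) ≤ 4 * K),
      hKK, hF2, mul_pos hnpos (pow_pos hs0 2)]
  · have h1 : (nmin : ℝ) / K * ∑ j, dist (μstar j) (μhat (τ j)) ^ 2 ≤ F := by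
      rw [Finset.mul_sum]
      exact le_trans (Finset.sum_le_sum fun j _ => hterm j) hAle
    rw [div_mul_eq_mul_div, le_div_iff₀ hnpos]
    have h2 : (nmin : ℝ) * ∑ j, dist (μstar j) (μhat (τ j)) ^ 2 ≤ K * F := by
      calc (nmin : ℝ) * ∑ j, dist (μstar j) (μhat (τ j)) ^ 2
          = K * ((nmin : ℝ) / K * ∑ j, dist (μstar j) (μhat (τ j)) ^ 2) := by
            field_simp
        _ ≤ K * F := mul_le_mul_of_nonneg_left h1 hKpos.le
    linarith
end
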